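/- Let p_r = (3/64) · Σ_{k≥0} (3/4)^k · Σ_{m≥k} 4^{−m}(4·Cat(m) − Cat(m+1)). Then p_r = 1/4. -/

import Mathlib

open Filter Finset

private noncomputable def cR (n : ℕ) : ℝ := (catalan n : ℝ)

private lemma centralBinom_le (n : ℕ) : n.centralBinom ≤ 4 ^ n := by
  have h : n.centralBinom ≤ ∑ i ∈ range (2 * n + 1), (2 * n).choose i := by
    exact Finset.single_le_sum (f := fun i => (2 * n).choose i)
      (fun i _ => Nat.zero_le _) (by simp [Nat.lt_succ_iff]; omega)
  calc n.centralBinom ≤ ∑ i ∈ range (2 * n + 1), (2 * n).choose i := h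
    _ = 2 ^ (2 * n) := Nat.sum_range_choose (2 * n)
    _ = 4 ^ n := by rw [pow_mul]; norm_num

private lemma cat_mul_le (n : ℕ) : (n + 1) * catalan n ≤ 4 ^ n := by
  rw [succ_mul_catalan_eq_centralBinom]; exact centralBinom_le n

private lemma cR_le (n : ℕ) : cR n ≤ 4 ^ n / (n + 1) := by
  rw [le_div_iff₀ (by positivity)]
  have := cat_mul_le n
  have : ((n + 1) * catalan n : ℝ) ≤ (4 ^ n : ℕ) := by exact_mod_cast this
  push_cast at this
  unfold cR; linarith

private lemma cR_nonneg (n : ℕ) : 0 ≤ cR n := by unfold cR; positivity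

private lemma cat_succ_le (n : ℕ) : catalan (n + 1) ≤ 4 * catalan n := by
  have h1 : (n + 1 + 1) * catalan (n + 1) = (n + 1).centralBinom :=
    succ_mul_catalan_eq_centralBinom (n + 1)
  have h2 : (n + 1) * (n + 1).centralBinom = 2 * (2 * n + 1) * n.centralBinom :=
    Nat.succ_mul_centralBinom_succ n
  have h3 : (n + 1) * catalan n = n.centralBinom := succ_mul_catalan_eq_centralBinom n
  have key : (n + 2) * catalan (n + 1) ≤ (n + 2) * (4 * catalan n) := by
    have e : (n + 1) * ((n + 2) * catalan (n + 1)) = (4 * n + 2) * ((n + 1) * catalan n) := by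
      rw [h3]
      calc (n + 1) * ((n + 2) * catalan (n + 1)) = (n + 1) * ((n + 1 + 1) * catalan (n + 1)) := by
            ring_nf
        _ = (n + 1) * (n + 1).centralBinom := by rw [h1]
        _ = 2 * (2 * n + 1) * n.centralBinom := h2
        _ = (4 * n + 2) * n.centralBinom := by ring_nf
    have e2 : (n + 1) * ((n + 2) * catalan (n + 1)) ≤ (n + 1) * ((n + 2) * (4 * catalan n)) := by
      rw [e]; nlinarith [Nat.zero_le (catalan n)]
    exact Nat.le_of_mul_le_mul_left e2 (Nat.succ_pos n)
  exact Nat.le_of_mul_le_mul_left key (by omega)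

private noncomputable def g (m : ℕ) : ℝ := 4 * cR m / 4 ^ m

private lemma g_nonneg (m : ℕ) : 0 ≤ g m := by
  unfold g; have := cR_nonneg m; positivity

private lemma g_antitone (m : ℕ) : g (m + 1) ≤ g m := by
  unfold g cR
  rw [div_le_div_iff₀ (by positivity) (by positivity)]
  have h : (catalan (m + 1) : ℝ) ≤ 4 * catalan m := by exact_mod_cast cat_succ_le m
  have h4 : (4 : ℝ) ^ (m + 1) = 4 * 4 ^ m := by ring
  nlinarith [pow_pos (show (0:ℝ) < 4 by norm_num) m]

private lemma g_tendsto : Tendsto g atTop (nhds 0) := by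
  have hb : Tendsto (fun m : ℕ => 4 / ((m : ℝ) + 1)) atTop (nhds 0) := by
    apply Tendsto.div_atTop tendsto_const_nhds
    exact tendsto_atTop_add_const_right _ _ tendsto_natCast_atTop_atTop
  apply squeeze_zero g_nonneg _ hb
  intro m
  unfold g
  rw [div_le_div_iff₀ (by positivity) (by positivity)]
  have := cR_le m
  have h2 : cR m * ((m : ℝ) + 1) ≤ 4 ^ m := by
    rw [← le_div_iff₀ (by positivity)]; exact this
  nlinarith [cR_nonneg m, pow_pos (show (0:ℝ) < 4 by norm_num) m]

private lemma term_eq (m : ℕ) :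
    (4 : ℝ) ^ (-(m : ℤ)) * (4 * catalan m - catalan (m + 1)) = g m - g (m + 1) := by
  unfold g cR
  rw [zpow_neg, zpow_natCast]
  have h4 : (4 : ℝ) ^ (m + 1) = 4 * 4 ^ m := by ring
  have hp : (0:ℝ) < 4 ^ m := by positivity
  field_simp
  ring

private lemma inner_hasSum (k : ℕ) :
    HasSum (fun j : ℕ => (4 : ℝ) ^ (-((k + j : ℕ) : ℤ)) *
      (4 * catalan (k + j) - catalan (k + j + 1))) (g k) := by
  have heq : (fun j : ℕ => (4 : ℝ) ^ (-((k + j : ℕ) : ℤ)) *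
      (4 * catalan (k + j) - catalan (k + j + 1))) = fun j => g (k + j) - g (k + j + 1) := by
    funext j; exact term_eq (k + j)
  rw [heq]
  rw [hasSum_iff_tendsto_nat_of_nonneg (fun j => sub_nonneg.mpr (g_antitone (k + j)))]
  have hsum : ∀ n : ℕ, ∑ j ∈ range n, (g (k + j) - g (k + j + 1)) = g k - g (k + n) := by
    intro n
    have := Finset.sum_range_sub' (f := fun j => g (k + j)) n
    simpa [add_assoc] using this
  simp_rw [hsum]
  have h1 : Tendsto (fun n : ℕ => g (k + n)) atTop (nhds 0) := by
    apply g_tendsto.comp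
    exact tendsto_atTop_atTop.mpr (fun b => ⟨b, fun n hn => by omega⟩)
  simpa using tendsto_const_nhds.sub h1

-- Generating function part
private noncomputable def f (k : ℕ) : ℝ := cR k * (3 / 16) ^ k

private lemma f_le (k : ℕ) : f k ≤ (3 / 4 : ℝ) ^ k / (k + 1) := by
  unfold f
  have h := cR_le k
  have hx : (0:ℝ) < (3/16 : ℝ) ^ k := by positivity
  calc cR k * (3/16) ^ k ≤ (4 ^ k / (k + 1)) * (3/16) ^ k := by
        apply mul_le_mul_of_nonneg_right h (le_of_lt hx)
    _ = (3/4 : ℝ) ^ k / (k + 1) := by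
        rw [div_mul_eq_mul_div, ← mul_pow]; norm_num

private lemma f_nonneg (k : ℕ) : 0 ≤ f k := by
  unfold f; have := cR_nonneg k; positivity

private lemma f_le' (k : ℕ) : f k ≤ (3 / 4 : ℝ) ^ k := by
  refine (f_le k).trans ?_
  rw [div_le_iff₀ (by positivity)]
  nlinarith [pow_nonneg (show (0:ℝ) ≤ 3/4 by norm_num) k, Nat.cast_nonneg (α := ℝ) k]

private lemma summable_f : Summable f :=
  Summable.of_nonneg_of_le f_nonneg f_le'
    (summable_geometric_of_lt_one (by norm_num) (by norm_num))

private noncomputable def S : ℝ := ∑' k, f k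

private lemma S_sq : S * S = ∑' n, cR (n + 1) * (3 / 16 : ℝ) ^ n := by
  have hn : Summable fun k => ‖f k‖ := by
    simpa [Real.norm_eq_abs, abs_of_nonneg (f_nonneg _)] using summable_f
  have h := tsum_mul_tsum_eq_tsum_sum_antidiagonal_of_summable_norm hn hn
  unfold S
  rw [h]
  congr 1
  funext n
  unfold cR
  rw [catalan_succ']
  push_cast
  rw [Finset.sum_mul]
  apply Finset.sum_congr rfl
  intro ij hij
  rw [Finset.HasAntidiagonal.mem_antidiagonal] at hij
  unfold f cR
  rw [← hij]
  ring

private lemma S_eq : S = 1 + (3 / 16) * (S * S) := by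
  rw [S_sq]
  have h0 : S = f 0 + ∑' n, f (n + 1) := Summable.tsum_eq_zero_add summable_f
  have hf0 : f 0 = 1 := by simp [f, cR]
  have hshift : ∀ n : ℕ, f (n + 1) = (3 / 16) * (cR (n + 1) * (3 / 16 : ℝ) ^ n) := by
    intro n; unfold f; ring
  rw [h0, hf0]
  congr 1
  simp_rw [hshift]
  rw [tsum_mul_left]

private lemma summable_shift : Summable (fun n => f (n + 1)) :=
  (summable_nat_add_iff 1).mpr summable_f

private lemma S_lt_four : S < 4 := by
  have h0 : S = f 0 + ∑' n, f (n + 1) := Summable.tsum_eq_zero_add summable_f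
  have hf0 : f 0 = 1 := by simp [f, cR]
  have hb : ∀ n : ℕ, f (n + 1) ≤ (1 / 2) * (3 / 4 : ℝ) ^ (n + 1) := by
    intro n
    calc f (n + 1) ≤ (3 / 4 : ℝ) ^ (n + 1) / (n + 1 + 1) := by
          have := f_le (n + 1); push_cast at this ⊢; linarith
      _ ≤ (1 / 2) * (3 / 4 : ℝ) ^ (n + 1) := by
          rw [div_le_iff₀ (by positivity)]
          have hp : (0:ℝ) ≤ (3/4:ℝ) ^ (n + 1) := by positivity
          have hn : (0:ℝ) ≤ (n : ℝ) := Nat.cast_nonneg n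
          nlinarith
  have hgs : Summable (fun n : ℕ => (1 / 2) * (3 / 4 : ℝ) ^ (n + 1)) := by
    apply Summable.mul_left
    exact (summable_nat_add_iff 1).mpr (summable_geometric_of_lt_one (by norm_num) (by norm_num))
  have hle : (∑' n, f (n + 1)) ≤ ∑' n : ℕ, (1 / 2) * (3 / 4 : ℝ) ^ (n + 1) :=
    Summable.tsum_le_tsum hb summable_shift hgs
  have hval : (∑' n : ℕ, (1 / 2) * (3 / 4 : ℝ) ^ (n + 1)) = 3 / 2 := by
    have : ∀ n : ℕ, (1 / 2) * (3 / 4 : ℝ) ^ (n + 1) = (3 / 8) * (3 / 4 : ℝ) ^ n := by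
      intro n; ring
    simp_rw [this]
    rw [tsum_mul_left, tsum_geometric_of_lt_one (by norm_num) (by norm_num)]
    norm_num
  rw [h0, hf0]
  rw [hval] at hle
  linarith

private lemma S_val : S = 4 / 3 := by
  have h := S_eq
  have h4 := S_lt_four
  have hfac : (3 * S - 4) * (S - 4) = 0 := by nlinarith
  rcases mul_eq_zero.mp hfac with h1 | h1
  · linarith
  · linarith

/-- `p_r = (3/64) · Σ_{k≥0} (3/4)^k · Σ_{m≥k} 4^{−m}(4·Cat(m) − Cat(m+1)) = 1/4`,
the total probability that a step of the Schnyder peeling process on the UIHPT is a right step.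
The inner sum over `m ≥ k` is written as a sum over `j = m - k ≥ 0`. -/
theorem stmt_8 :
    (3 / 64 : ℝ) * ∑' k : ℕ, (3 / 4 : ℝ) ^ k *
        ∑' j : ℕ, (4 : ℝ) ^ (-((k + j : ℕ) : ℤ)) * (4 * catalan (k + j) - catalan (k + j + 1))
      = 1 / 4 := by
  have hinner : ∀ k : ℕ, (∑' j : ℕ, (4 : ℝ) ^ (-((k + j : ℕ) : ℤ)) *
      (4 * catalan (k + j) - catalan (k + j + 1))) = g k :=
    fun k => (inner_hasSum k).tsum_eq
  have houter : (fun k : ℕ => (3 / 4 : ℝ) ^ k * g k) = fun k => 4 * f k := by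
    funext k
    unfold g f cR
    have hp : (0:ℝ) < 4 ^ k := by positivity
    have he : (3 / 4 : ℝ) ^ k / 4 ^ k = (3 / 16) ^ k := by
      rw [← div_pow]; norm_num
    rw [mul_comm, mul_div_assoc, mul_assoc, div_mul_eq_mul_div, mul_comm ((catalan k : ℝ)) _,
      ← div_mul_eq_mul_div, he]
    ring
  simp_rw [hinner]
  rw [houter, tsum_mul_left]
  have : (∑' k, f k) = 4 / 3 := S_val
  rw [this]
  norm_num
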